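/- Let C be a d-clutter on a finite vertex set V. If C is chordal, then its ascent C^+ (a (d+1)-dimensional uniform clutter) is chordal. -/
import Mathlib


namespace ClutterPaper

variable {α : Type*} [DecidableEq α]

/-- `C` is a uniform clutter on vertex set `V` all of whose circuits have cardinality `c`
(i.e. a `(c-1)`-dimensional uniform clutter). -/
def IsClutter (V : Finset α) (c : ℕ) (C : Finset (Finset α)) : Prop :=
  ∀ F ∈ C, F ⊆ V ∧ F.card = c

/-- The complement clutter `C̄`: all `c`-subsets of `V` not in `C`. -/
def compClutter (V : Finset α) (c : ℕ) (C : Finset (Finset α)) : Finset (Finset α) :=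
  V.powersetCard c \ C

/-- `C^∨ = { V \ F | F ∈ C̄ }`. -/
def clutterDual (V : Finset α) (c : ℕ) (C : Finset (Finset α)) : Finset (Finset α) :=
  (compClutter V c C).image fun F => V \ F

/-- `A` is a clique of the clutter `C` (with circuit cardinality `c`) on vertex set `V`:
all `c`-subsets of `A` are circuits. -/
def IsClique (V : Finset α) (c : ℕ) (C : Finset (Finset α)) (A : Finset α) : Prop :=
  A ⊆ V ∧ ∀ F ⊆ A, F.card = c → F ∈ C

/-- The closed neighborhood `N_C[e] = e ∪ { v ∈ V | e ∪ {v} ∈ C }`. -/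
def closedNbhd (V : Finset α) (C : Finset (Finset α)) (e : Finset α) : Finset α :=
  e ∪ V.filter fun v => insert v e ∈ C

/-- `e` is a maximal subcircuit of the clutter `C` with circuit cardinality `c`:
`e` has cardinality `c - 1` and is contained in some circuit. -/
def IsMS (c : ℕ) (C : Finset (Finset α)) (e : Finset α) : Prop :=
  e.card + 1 = c ∧ ∃ F ∈ C, e ⊆ F

/-- `e` is a simplicial maximal subcircuit: a maximal subcircuit whose closed
neighborhood is a clique. -/
def IsSMS (V : Finset α) (c : ℕ) (C : Finset (Finset α)) (e : Finset α) : Prop :=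
  IsMS c C e ∧ IsClique V c C (closedNbhd V C e)

/-- `e` is a free maximal subcircuit: contained in exactly one circuit. -/
def IsFreeMS (c : ℕ) (C : Finset (Finset α)) (e : Finset α) : Prop :=
  e.card + 1 = c ∧ ∃! F, F ∈ C ∧ e ⊆ F

/-- Deletion `C − e` of a maximal subcircuit: the circuits not containing `e`. -/
def delMS (C : Finset (Finset α)) (e : Finset α) : Finset (Finset α) :=
  C.filter fun F => ¬ e ⊆ F

/-- Deletion of a vertex: circuits (or faces) not containing `v`. -/
def delVert (C : Finset (Finset α)) (v : α) : Finset (Finset α) :=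
  C.filter fun F => v ∉ F

/-- Chordality of a uniform clutter (circuit cardinality `c`) on `V`: there is a sequence of
deletions of simplicial maximal subcircuits ending in the clutter with no circuits. -/
inductive Chordal (V : Finset α) (c : ℕ) : Finset (Finset α) → Prop
  | empty : Chordal V c ∅
  | step {C : Finset (Finset α)} (e : Finset α) :
      IsSMS V c C e → Chordal V c (delMS C e) → Chordal V c C

/-- The ascent `C⁺` of a clutter with circuit cardinality `c`: all `(c+1)`-subsets of `V`
that are cliques of `C`. -/
def ascent (V : Finset α) (c : ℕ) (C : Finset (Finset α)) : Finset (Finset α) :=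
  (V.powersetCard (c + 1)).filter fun A => A.powersetCard c ⊆ C

/-- The simplicial complex `⟨D⟩` generated by a clutter `D`: all subsets of its elements. -/
def complexOf (D : Finset (Finset α)) : Finset (Finset α) :=
  D.biUnion Finset.powerset

/-- A family of finsets is a simplicial complex if it is downward closed. -/
def IsComplex (Δ : Finset (Finset α)) : Prop :=
  ∀ F ∈ Δ, ∀ G ⊆ F, G ∈ Δ

/-- The facets (maximal faces) of a simplicial complex. -/
def facets (Δ : Finset (Finset α)) : Finset (Finset α) :=
  Δ.filter fun F => ∀ G ∈ Δ, F ⊆ G → F = G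

/-- `link_Δ(v) = { F \ {v} | v ∈ F ∈ Δ }`. -/
def link (Δ : Finset (Finset α)) (v : α) : Finset (Finset α) :=
  (Δ.filter fun F => v ∈ F).image fun F => F.erase v

/-- `v` is a shedding vertex of `Δ`: no face of `link_Δ(v)` is a facet of `Δ − v`. -/
def Shedding (Δ : Finset (Finset α)) (v : α) : Prop :=
  ∀ F ∈ link Δ v, F ∉ facets (delVert Δ v)

/-- Alexander dual of a simplicial complex on vertex set `V`:
`Δ^∨ = { V \ F | F ⊆ V, F ∉ Δ }`. -/
def alexDual (V : Finset α) (Δ : Finset (Finset α)) : Finset (Finset α) :=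
  (V.powerset.filter fun F => F ∉ Δ).image fun F => V \ F

/-- `Δ` is pure with all facets of cardinality `c` (dimension `c - 1`), and nonempty. -/
def PureDim (Δ : Finset (Finset α)) (c : ℕ) : Prop :=
  Δ.Nonempty ∧ ∀ F ∈ facets Δ, F.card = c

/-- Vertex decomposability of a simplicial complex. -/
inductive VDecomp : Finset (Finset α) → Prop
  | simplex {Δ : Finset (Finset α)} : (facets Δ).card = 1 → VDecomp Δ
  | shed {Δ : Finset (Finset α)} (v : α) : Shedding Δ v →
      VDecomp (link Δ v) → VDecomp (delVert Δ v) → VDecomp Δ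

/-- The vertex set of a clutter (or of the complex it generates). -/
def vertexSet (Ω : Finset (Finset α)) : Finset α :=
  Ω.biUnion id

/-- `Ω` (given by its set of facets, each of cardinality `d+1`) is a `d`-cycle:
nonempty, pure of dimension `d`, `d`-path connected, and every `(d-1)`-dimensional
face lies in an even number of `d`-faces. -/
def IsCycle (d : ℕ) (Ω : Finset (Finset α)) : Prop :=
  Ω.Nonempty ∧ (∀ F ∈ Ω, F.card = d + 1) ∧
    (∀ F ∈ Ω, ∀ G ∈ Ω,
      Relation.ReflTransGen (fun A B => A ∈ Ω ∧ B ∈ Ω ∧ (A ∩ B).card = d) F G) ∧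
    ∀ e : Finset α, e.card = d → Even ((Ω.filter fun F => e ⊆ F).card)

/-- A face-minimal `d`-cycle: no `d`-cycle has a strictly smaller set of `d`-faces. -/
def FaceMinimalCycle (d : ℕ) (Ω : Finset (Finset α)) : Prop :=
  IsCycle d Ω ∧ ∀ Ω' : Finset (Finset α), IsCycle d Ω' → Ω' ⊆ Ω → Ω' = Ω

/-- `Ω` is `d`-complete: it contains every `(d+1)`-subset of its vertex set. -/
def DComplete (d : ℕ) (Ω : Finset (Finset α)) : Prop :=
  ∀ F ⊆ vertexSet Ω, F.card = d + 1 → F ∈ Ω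

/-- The complex `⟨C⟩` generated by the `d`-dimensional clutter `C` is `d`-chorded. -/
def Chorded (d : ℕ) (C : Finset (Finset α)) : Prop :=
  ∀ Ω : Finset (Finset α), FaceMinimalCycle d Ω → Ω ⊆ C → ¬ DComplete d Ω →
    ∃ (k : ℕ) (Ωs : Fin k → Finset (Finset α)), 2 ≤ k ∧
      (∀ i, IsCycle d (Ωs i) ∧ Ωs i ⊆ C) ∧
      (∀ F ∈ Ω, ∃ i, F ∈ Ωs i) ∧
      (∀ F ∈ Ω, Odd ((Finset.univ.filter fun i => F ∈ Ωs i).card)) ∧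
      (∀ F : Finset α, (∃ i, F ∈ Ωs i) → F ∉ Ω →
        Even ((Finset.univ.filter fun i => F ∈ Ωs i).card)) ∧
      ∀ i, vertexSet (Ωs i) ⊂ vertexSet Ω

/-- The circuits of `D` admit an admissible order. -/
def HasAdmissibleOrder (D : Finset (Finset α)) : Prop :=
  ∃ (t : ℕ) (F : Fin t → Finset α), Function.Injective F ∧
    (∀ G, G ∈ D ↔ ∃ i, F i = G) ∧
    ∀ i j : Fin t, j < i →
      ∃ l ∈ F j \ F i, ∃ k : Fin t, k < i ∧ F k \ F i = {l}

/-- Contraction `D/v` of a (not necessarily uniform) clutter: the minimal sets of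
`{ e \ {v} | e ∈ D }`. -/
def contractAux (D : Finset (Finset α)) (v : α) : Finset (Finset α) :=
  D.image fun e => e.erase v

def contract (D : Finset (Finset α)) (v : α) : Finset (Finset α) :=
  (contractAux D v).filter fun e => ∀ f ∈ contractAux D v, f ⊆ e → f = e

/-- `D` has a simplicial vertex (trivially true if `D` has no vertices). -/
def HasSimpVertex (D : Finset (Finset α)) : Prop :=
  vertexSet D = ∅ ∨ ∃ v ∈ vertexSet D, ∀ e₁ ∈ D, ∀ e₂ ∈ D, v ∈ e₁ → v ∈ e₂ →
    ∃ e₃ ∈ D, e₃ ⊆ (e₁ ∪ e₂).erase v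

/-- `D` is W-chordal: every clutter obtained from `D` by a sequence of vertex deletions
and contractions has a simplicial vertex. -/
def WChordal (D : Finset (Finset α)) : Prop :=
  ∀ D' : Finset (Finset α),
    Relation.ReflTransGen (fun X Y => ∃ v, Y = delVert X v ∨ Y = contract X v) D D' →
    HasSimpVertex D'

lemma mem_ascent_iff {V : Finset α} {c : ℕ} {C : Finset (Finset α)} {A : Finset α} :
    A ∈ ascent V c C ↔ A ⊆ V ∧ A.card = c + 1 ∧ ∀ F ⊆ A, F.card = c → F ∈ C := by
  simp only [ascent, Finset.mem_filter, Finset.mem_powersetCard]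
  constructor
  · rintro ⟨⟨h1, h2⟩, h3⟩
    exact ⟨h1, h2, fun F hF hc => h3 (Finset.mem_powersetCard.mpr ⟨hF, hc⟩)⟩
  · rintro ⟨h1, h2, h3⟩
    refine ⟨⟨h1, h2⟩, fun F hF => ?_⟩
    obtain ⟨hF1, hF2⟩ := Finset.mem_powersetCard.mp hF
    exact h3 F hF1 hF2

lemma key_ascent (V : Finset α) (d : ℕ) (C : Finset (Finset α)) (e : Finset α)
    (he : IsSMS V (d + 1) C e)
    (hdel : Chordal V (d + 2) (ascent V (d + 1) (delMS C e))) :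
    ∀ (n : ℕ) (R : Finset α) (D : Finset (Finset α)), D.card ≤ n →
      D = (ascent V (d + 1) C).filter (fun A => ∀ r ∈ R, ¬ insert r e ⊆ A) →
      Chordal V (d + 2) D := by
  obtain ⟨⟨hecard, _⟩, hNV, hNclique⟩ := he
  have hsubN : ∀ A ∈ ascent V (d + 1) C, e ⊆ A → A ⊆ closedNbhd V C e := by
    intro A hA heA x hx
    obtain ⟨hAV, hAcard, hAsub⟩ := mem_ascent_iff.mp hA
    by_cases hxe : x ∈ e
    · exact Finset.mem_union_left _ hxe
    · refine Finset.mem_union_right _ (Finset.mem_filter.mpr ⟨hAV hx, ?_⟩)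
      exact hAsub _ (Finset.insert_subset hx heA)
        (by rw [Finset.card_insert_of_notMem hxe]; omega)
  intro n
  induction n with
  | zero =>
    intro R D hcard hD
    have : D = ∅ := Finset.card_eq_zero.mp (Nat.le_zero.mp hcard)
    rw [this]; exact Chordal.empty
  | succ n ih =>
    intro R D hcard hD
    by_cases hA : ∃ A ∈ D, e ⊆ A
    · obtain ⟨A, hAD, heA⟩ := hA
      have hAmem := Finset.mem_filter.mp (hD ▸ hAD)
      obtain ⟨hAC, hAR⟩ := hAmem
      have hAN : A ⊆ closedNbhd V C e := hsubN A hAC heA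
      have hcardA : A.card = d + 2 := (mem_ascent_iff.mp hAC).2.1
      have hu : ∃ u ∈ A, u ∉ e := by
        by_contra hcon
        push_neg at hcon
        have := Finset.card_le_card (fun x hx => hcon x hx)
        omega
      obtain ⟨u, huA, hue⟩ := hu
      have hfA : insert u e ⊆ A := Finset.insert_subset huA heA
      have hfcard : (insert u e).card = d + 1 := by
        rw [Finset.card_insert_of_notMem hue]; omega
      have hNfN : closedNbhd V D (insert u e) ⊆ closedNbhd V C e := by
        intro x hx
        rcases Finset.mem_union.mp hx with h | h
        · exact hAN (hfA h)
        · obtain ⟨hxV, hxD⟩ := Finset.mem_filter.mp h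
          have hxC : insert x (insert u e) ∈ ascent V (d + 1) C :=
            (Finset.mem_filter.mp (hD ▸ hxD)).1
          exact hsubN _ hxC
            ((Finset.subset_insert u e).trans (Finset.subset_insert x _))
            (Finset.mem_insert_self x _)
      have hSMS : IsSMS V (d + 2) D (insert u e) := by
        refine ⟨⟨by omega, ⟨A, hAD, hfA⟩⟩, hNfN.trans hNV, ?_⟩
        intro B hBNf hBcard
        have hBN : B ⊆ closedNbhd V C e := hBNf.trans hNfN
        have hBC : B ∈ ascent V (d + 1) C := by
          refine mem_ascent_iff.mpr ⟨hBN.trans hNV, hBcard, fun F hF hFc => ?_⟩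
          exact hNclique F (hF.trans hBN) hFc
        rw [hD]
        refine Finset.mem_filter.mpr ⟨hBC, ?_⟩
        intro r hrR hrB
        by_cases hre : r ∈ e
        · exact hAR r hrR (by rw [Finset.insert_eq_self.mpr hre]; exact heA)
        · have hrB' : r ∈ B := hrB (Finset.mem_insert_self r e)
          rcases Finset.mem_union.mp (hBNf hrB') with h | h
          · rcases Finset.mem_insert.mp h with h | h
            · exact hAR r hrR (h ▸ hfA)
            · exact hre h
          · obtain ⟨hxV, hxD⟩ := Finset.mem_filter.mp h
            rw [hD] at hxD
            exact (Finset.mem_filter.mp hxD).2 r hrR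
              (Finset.insert_subset_insert r (Finset.subset_insert u e))
      have hdelEq : delMS D (insert u e) = (ascent V (d + 1) C).filter
          (fun A' => ∀ r ∈ insert u R, ¬ insert r e ⊆ A') := by
        rw [hD]
        ext B
        simp only [delMS, Finset.mem_filter, Finset.forall_mem_insert]
        tauto
      have hlt : (delMS D (insert u e)).card < D.card := by
        have hss : delMS D (insert u e) ⊂ D := by
          refine (Finset.ssubset_iff_of_subset (Finset.filter_subset _ _)).mpr ⟨A, hAD, ?_⟩
          simp [delMS, hfA]
        exact Finset.card_lt_card hss
      exact Chordal.step (insert u e) hSMS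
        (ih (insert u R) (delMS D (insert u e)) (by omega) hdelEq)
    · push_neg at hA
      have hDeq : D = ascent V (d + 1) (delMS C e) := by
        ext B
        constructor
        · intro hBD
          obtain ⟨hBC, hBR⟩ := Finset.mem_filter.mp (hD ▸ hBD)
          obtain ⟨hBV, hBcard, hBsub⟩ := mem_ascent_iff.mp hBC
          have hne : ¬ e ⊆ B := hA B hBD
          refine mem_ascent_iff.mpr ⟨hBV, hBcard, fun F hF hFc => ?_⟩
          refine Finset.mem_filter.mpr ⟨hBsub F hF hFc, fun heF => hne (heF.trans hF)⟩
        · intro hBdel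
          obtain ⟨hBV, hBcard, hBsub⟩ := mem_ascent_iff.mp hBdel
          rw [hD]
          refine Finset.mem_filter.mpr ⟨mem_ascent_iff.mpr ⟨hBV, hBcard,
            fun F hF hFc => (Finset.mem_filter.mp (hBsub F hF hFc)).1⟩, ?_⟩
          intro r hrR hrB
          have heB : e ⊆ B := (Finset.subset_insert r e).trans hrB
          have hv : ∃ v ∈ B, v ∉ e := by
            by_contra hcon
            push_neg at hcon
            have := Finset.card_le_card (fun x hx => hcon x hx)
            omega
          obtain ⟨v, hvB, hve⟩ := hv
          have := hBsub (insert v e) (Finset.insert_subset hvB heB)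
            (by rw [Finset.card_insert_of_notMem hve]; omega)
          exact (Finset.mem_filter.mp this).2 (Finset.subset_insert v e)
      rw [hDeq]; exact hdel

/-- If the `d`-clutter `C` is chordal, then so is its ascent `C⁺`. -/
theorem chordal_ascent (V : Finset α) (d : ℕ) (C : Finset (Finset α))
    (hC : IsClutter V (d + 1) C) (h : Chordal V (d + 1) C) :
    Chordal V (d + 2) (ascent V (d + 1) C) := by
  clear hC
  induction h with
  | empty =>
    have hemp : ascent V (d + 1) (∅ : Finset (Finset α)) = ∅ := by
      ext A
      simp only [Finset.notMem_empty, iff_false]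
      intro hA
      obtain ⟨hAV, hAc, hsub⟩ := mem_ascent_iff.mp hA
      obtain ⟨F, hF, hFc⟩ := Finset.exists_subset_card_eq (show d + 1 ≤ A.card by omega)
      exact Finset.notMem_empty F (hsub F hF hFc)
    rw [hemp]; exact Chordal.empty
  | @step C e hSMS hdel ih =>
    have h0 : ascent V (d + 1) C = (ascent V (d + 1) C).filter
        (fun A => ∀ r ∈ (∅ : Finset α), ¬ insert r e ⊆ A) := by
      simp
    rw [h0]
    exact key_ascent V d C e hSMS ih _ ∅ _ le_rfl rfl

end ClutterPaper
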